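/- For every n ∈ ℕ and all u₁, v₁, u₂, v₂ ∈ ℂ with |u₁|² + |v₁|² = 1 and |u₂|² + |v₂|² = 1, one has Mⁿ(u₁u₂ − conj(v₁)v₂, v₁u₂ + conj(u₁)v₂) = Mⁿ(u₁,v₁) · Mⁿ(u₂,v₂); that is, the map sending the SU(2) element [[u, −conj(v)], [v, conj(u)]] to Mⁿ(u,v) is a group homomorphism (a representation of SU(2)). -/

import Mathlib

open Matrix Finset

/-- The polynomial parametrization `U^{(j)}` (with `j = n/2`, index `k = j - m`) of the
spin-`j` rotation matrix, as an `(n+1)×(n+1)` complex matrix depending on `u, v ∈ ℂ`. -/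
noncomputable def Mrep (n : ℕ) (u v : ℂ) : Matrix (Fin (n + 1)) (Fin (n + 1)) ℂ :=
  Matrix.of fun k' k =>
    (Real.sqrt ((n.choose (k : ℕ) : ℝ) / (n.choose (k' : ℕ) : ℝ)) : ℂ) *
      ∑ a ∈ Finset.Icc (max 0 ((k : ℕ) - (k' : ℕ))) (min (k : ℕ) (n - (k' : ℕ))),
        ((k : ℕ).choose a : ℂ) * ((n - (k : ℕ)).choose ((k' : ℕ) + a - (k : ℕ)) : ℂ) *
          (-1 : ℂ) ^ a * u ^ (n - (k' : ℕ) - a) * (starRingEnd ℂ u) ^ ((k : ℕ) - a) *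
          v ^ ((k' : ℕ) + a - (k : ℕ)) * (starRingEnd ℂ v) ^ a

open MvPolynomial

noncomputable def trm (n k : ℕ) (u v : ℂ) (p : ℕ × ℕ) : MvPolynomial (Fin 2) ℂ :=
  C ((k.choose p.1 : ℂ) * ((n-k).choose p.2 : ℂ) * (starRingEnd ℂ u)^p.1 *
      (-(starRingEnd ℂ v))^(k-p.1) * v^p.2 * u^(n-k-p.2)) *
    (X 0 ^ (p.1 + p.2) * X 1 ^ ((k - p.1) + ((n-k) - p.2)))

noncomputable def Spoly (n k : ℕ) (u v : ℂ) : MvPolynomial (Fin 2) ℂ :=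
  (C (starRingEnd ℂ u) * X 0 - C (starRingEnd ℂ v) * X 1) ^ k *
    (C v * X 0 + C u * X 1) ^ (n - k)

lemma Spoly_expand (n k : ℕ) (u v : ℂ) :
    Spoly n k u v = ∑ p ∈ range (k+1) ×ˢ range ((n-k)+1), trm n k u v p := by
  rw [Spoly, sub_eq_add_neg, add_pow, add_pow, Finset.sum_mul_sum]
  rw [Finset.sum_product]
  refine Finset.sum_congr rfl fun i hi => Finset.sum_congr rfl fun b hb => ?_
  simp only [trm, neg_mul_eq_neg_mul, ← map_neg (C : ℂ →+* MvPolynomial (Fin 2) ℂ), mul_pow,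
    map_pow, _root_.map_mul, ← map_natCast (C : ℂ →+* MvPolynomial (Fin 2) ℂ), pow_add]
  ring

noncomputable def Sent (n k' k : ℕ) (u v : ℂ) : ℂ :=
  ∑ a ∈ Finset.Icc (max 0 (k - k')) (min k (n - k')),
    (k.choose a : ℂ) * ((n - k).choose (k' + a - k) : ℂ) *
      (-1 : ℂ) ^ a * u ^ (n - k' - a) * (starRingEnd ℂ u) ^ (k - a) *
      v ^ (k' + a - k) * (starRingEnd ℂ v) ^ a

lemma fiber_sum (n k k' : ℕ) (hk : k ≤ n) (hk' : k' ≤ n) (u v : ℂ) :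
    ∑ p ∈ (range (k+1) ×ˢ range ((n-k)+1)).filter (fun p => p.1 + p.2 = k'),
      ((k.choose p.1 : ℂ) * ((n-k).choose p.2 : ℂ) * (starRingEnd ℂ u)^p.1 *
        (-(starRingEnd ℂ v))^(k-p.1) * v^p.2 * u^(n-k-p.2))
    = Sent n k' k u v := by
  rw [Sent]
  refine Finset.sum_nbij' (fun p => k - p.1) (fun a => (k - a, k' + a - k)) ?_ ?_ ?_ ?_ ?_
  · intro p hp
    simp only [Finset.mem_filter, Finset.mem_product, Finset.mem_range] at hp
    simp only [Finset.mem_Icc]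
    omega
  · intro a ha
    simp only [Finset.mem_Icc] at ha
    simp only [Finset.mem_filter, Finset.mem_product, Finset.mem_range]
    omega
  · intro p hp
    simp only [Finset.mem_filter, Finset.mem_product, Finset.mem_range] at hp
    have h1 : k - (k - p.1) = p.1 := by omega
    have h2 : k' + (k - p.1) - k = p.2 := by omega
    simp [h1, h2]
  · intro a ha
    simp only [Finset.mem_Icc] at ha
    simp only
    omega
  · intro p hp
    simp only [Finset.mem_filter, Finset.mem_product, Finset.mem_range] at hp
    have h1 : k - (k - p.1) = p.1 := by omega
    have h2 : k' + (k - p.1) - k = p.2 := by omega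
    have h3 : k.choose (k - p.1) = k.choose p.1 := by
      rw [Nat.choose_symm (by omega : p.1 ≤ k)]
    have h4 : n - k' - (k - p.1) = n - k - p.2 := by omega
    rw [h1, h2, h3, h4, neg_pow]
    ring

lemma Spoly_eq_sum (n k : ℕ) (hk : k ≤ n) (u v : ℂ) :
    Spoly n k u v
      = ∑ k' ∈ range (n+1), C (Sent n k' k u v) * (X 0 ^ k' * X 1 ^ (n - k')) := by
  rw [Spoly_expand]
  rw [← Finset.sum_fiberwise_of_maps_to (t := range (n+1)) (g := fun p => p.1 + p.2)
    (fun p hp => by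
      simp only [Finset.mem_product, Finset.mem_range] at hp ⊢; omega)]
  refine Finset.sum_congr rfl fun k' hk' => ?_
  rw [Finset.mem_range] at hk'
  rw [← fiber_sum n k k' hk (by omega) u v, map_sum, Finset.sum_mul]
  refine Finset.sum_congr rfl fun p hp => ?_
  simp only [Finset.mem_filter, Finset.mem_product, Finset.mem_range] at hp
  have h1 : p.1 + p.2 = k' := hp.2
  have h2 : (k - p.1) + ((n - k) - p.2) = n - k' := by omega
  rw [trm, h1, h2]

lemma single_eq_iff (n j k' : ℕ) (hj : j ≤ n) (hk' : k' ≤ n) :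
    (Finsupp.single (0 : Fin 2) j + Finsupp.single (1 : Fin 2) (n - j)
      = Finsupp.single (0 : Fin 2) k' + Finsupp.single (1 : Fin 2) (n - k')) ↔ j = k' := by
  constructor
  · intro h
    have := DFunLike.congr_fun h 0
    simpa [Finsupp.single_apply] using this
  · rintro rfl; rfl

lemma coeff_Spoly (n k k' : ℕ) (hk : k ≤ n) (hk' : k' ≤ n) (u v : ℂ) :
    MvPolynomial.coeff (Finsupp.single 0 k' + Finsupp.single 1 (n - k'))
      (Spoly n k u v) = Sent n k' k u v := by
  rw [Spoly_eq_sum n k hk, MvPolynomial.coeff_sum]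
  have : ∀ j ∈ range (n+1),
      MvPolynomial.coeff (Finsupp.single (0 : Fin 2) k' + Finsupp.single (1 : Fin 2) (n - k'))
        (C (Sent n j k u v) * (X 0 ^ j * X 1 ^ (n - j)))
      = if j = k' then Sent n j k u v else 0 := by
    intro j hj
    rw [Finset.mem_range] at hj
    rw [MvPolynomial.coeff_C_mul, X_pow_eq_monomial, X_pow_eq_monomial,
      MvPolynomial.monomial_mul, MvPolynomial.coeff_monomial, mul_one]
    rw [if_congr (single_eq_iff n j k' (by omega) hk') rfl rfl]
    split <;> simp [*]
  refine (Finset.sum_congr rfl this).trans ?_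
  rw [Finset.sum_ite_eq' (range (n+1)) k' (fun j => Sent n j k u v)]
  simp [Nat.lt_succ_iff, hk']

noncomputable def subst (u₁ v₁ : ℂ) :
    MvPolynomial (Fin 2) ℂ →ₐ[ℂ] MvPolynomial (Fin 2) ℂ :=
  MvPolynomial.aeval (fun i : Fin 2 =>
    if i = 0 then C (starRingEnd ℂ u₁) * X 0 - C (starRingEnd ℂ v₁) * X 1
    else C v₁ * X 0 + C u₁ * X 1)

lemma subst_Spoly (n k : ℕ) (u₁ v₁ u₂ v₂ : ℂ) :
    subst u₁ v₁ (Spoly n k u₂ v₂)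
      = Spoly n k (u₁ * u₂ - starRingEnd ℂ v₁ * v₂) (v₁ * u₂ + starRingEnd ℂ u₁ * v₂) := by
  rw [Spoly, Spoly]
  simp only [_root_.map_mul, map_pow, map_sub, map_add, subst, MvPolynomial.aeval_X,
    MvPolynomial.aeval_C, MvPolynomial.algebraMap_eq, map_neg, Complex.conj_conj,
    if_pos rfl]
  norm_num
  congr 2
  all_goals ring

lemma subst_monomial (n j : ℕ) (u₁ v₁ : ℂ) (hj : j ≤ n) :
    subst u₁ v₁ (X 0 ^ j * X 1 ^ (n - j)) = Spoly n j u₁ v₁ := by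
  simp only [_root_.map_mul, map_pow, subst, MvPolynomial.aeval_X, if_pos rfl, Spoly]
  norm_num

lemma Sent_mul (n k k' : ℕ) (hk : k ≤ n) (hk' : k' ≤ n) (u₁ v₁ u₂ v₂ : ℂ) :
    Sent n k' k (u₁ * u₂ - starRingEnd ℂ v₁ * v₂) (v₁ * u₂ + starRingEnd ℂ u₁ * v₂)
      = ∑ j ∈ range (n+1), Sent n k' j u₁ v₁ * Sent n j k u₂ v₂ := by
  have h : Spoly n k (u₁ * u₂ - starRingEnd ℂ v₁ * v₂) (v₁ * u₂ + starRingEnd ℂ u₁ * v₂)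
      = ∑ j ∈ range (n+1), C (Sent n j k u₂ v₂) * Spoly n j u₁ v₁ := by
    rw [← subst_Spoly, Spoly_eq_sum n k hk u₂ v₂, map_sum]
    refine Finset.sum_congr rfl fun j hj => ?_
    rw [_root_.map_mul, subst_monomial n j u₁ v₁ (by simpa [Nat.lt_succ_iff] using hj)]
    congr 1
    simp [subst, MvPolynomial.aeval_C, MvPolynomial.algebraMap_eq]
  have h2 := congrArg (MvPolynomial.coeff
    (Finsupp.single (0 : Fin 2) k' + Finsupp.single (1 : Fin 2) (n - k'))) h
  rw [coeff_Spoly n k k' hk hk'] at h2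
  rw [h2, MvPolynomial.coeff_sum]
  refine Finset.sum_congr rfl fun j hj => ?_
  rw [Finset.mem_range, Nat.lt_succ_iff] at hj
  rw [MvPolynomial.coeff_C_mul, coeff_Spoly n j k' hj hk', mul_comm]

lemma Mrep_apply (n : ℕ) (u v : ℂ) (k' k : Fin (n+1)) :
    Mrep n u v k' k
      = (Real.sqrt ((n.choose (k : ℕ) : ℝ) / (n.choose (k' : ℕ) : ℝ)) : ℂ) *
        Sent n (k' : ℕ) (k : ℕ) u v := rfl

lemma sqrt_comb (n j k k' : ℕ) (hj : j ≤ n) (hk : k ≤ n) (hk' : k' ≤ n) :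
    Real.sqrt ((n.choose j : ℝ) / (n.choose k' : ℝ)) *
      Real.sqrt ((n.choose k : ℝ) / (n.choose j : ℝ))
    = Real.sqrt ((n.choose k : ℝ) / (n.choose k' : ℝ)) := by
  rw [← Real.sqrt_mul (by positivity)]
  congr 1
  have h1 : (n.choose j : ℝ) ≠ 0 := Nat.cast_ne_zero.mpr (Nat.choose_pos hj).ne'
  have h2 : (n.choose k' : ℝ) ≠ 0 := Nat.cast_ne_zero.mpr (Nat.choose_pos hk').ne'
  field_simp

/-- The map `[[u, -conj v],[v, conj u]] ↦ Mⁿ(u,v)` is a group homomorphism: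
for SU(2) parameters `(u₁,v₁)` and `(u₂,v₂)`, the product of group elements has parameters
`(u₁u₂ − conj(v₁)v₂, v₁u₂ + conj(u₁)v₂)` and `Mⁿ` sends it to the product of matrices. -/
theorem Mrep_mul (n : ℕ) (u₁ v₁ u₂ v₂ : ℂ)
    (h₁ : ‖u₁‖ ^ 2 + ‖v₁‖ ^ 2 = 1)
    (h₂ : ‖u₂‖ ^ 2 + ‖v₂‖ ^ 2 = 1) :
    Mrep n (u₁ * u₂ - starRingEnd ℂ v₁ * v₂) (v₁ * u₂ + starRingEnd ℂ u₁ * v₂) =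
      Mrep n u₁ v₁ * Mrep n u₂ v₂ := by
  ext k' k
  rw [Matrix.mul_apply]
  simp only [Mrep_apply]
  rw [Sent_mul n (k : ℕ) (k' : ℕ) (Nat.lt_succ_iff.mp k.isLt) (Nat.lt_succ_iff.mp k'.isLt)]
  rw [Finset.mul_sum]
  rw [Fin.sum_univ_eq_sum_range (fun j =>
    ((Real.sqrt ((n.choose j : ℝ) / (n.choose (k' : ℕ) : ℝ)) : ℂ) * Sent n (k' : ℕ) j u₁ v₁) *
    ((Real.sqrt ((n.choose (k : ℕ) : ℝ) / (n.choose j : ℝ)) : ℂ) * Sent n j (k : ℕ) u₂ v₂))]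
  refine Finset.sum_congr rfl fun j hj => ?_
  rw [Finset.mem_range, Nat.lt_succ_iff] at hj
  rw [show ((Real.sqrt ((n.choose j : ℝ) / (n.choose (k' : ℕ) : ℝ)) : ℂ) * Sent n (k' : ℕ) j u₁ v₁) *
      ((Real.sqrt ((n.choose (k : ℕ) : ℝ) / (n.choose j : ℝ)) : ℂ) * Sent n j (k : ℕ) u₂ v₂)
      = ((Real.sqrt ((n.choose j : ℝ) / (n.choose (k' : ℕ) : ℝ)) *
          Real.sqrt ((n.choose (k : ℕ) : ℝ) / (n.choose j : ℝ)) : ℝ) : ℂ) *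
        (Sent n (k' : ℕ) j u₁ v₁ * Sent n j (k : ℕ) u₂ v₂) by
    push_cast; ring]
  rw [sqrt_comb n j (k : ℕ) (k' : ℕ) hj (Nat.lt_succ_iff.mp k.isLt) (Nat.lt_succ_iff.mp k'.isLt)]
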